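/- Assume that for every ε₀ > 0 both (1/915 + ε₀, 1 − 10/915 + ε₀) and (13/84 + ε₀, 13/84 + 1/2 + ε₀) are exponent pairs. Then for every ε > 0 there exist δ > 0, J ∈ ℕ and C > 0 such that the following holds: for every real t ≥ 2, every integer N with 1 ≤ N ≤ t^{1/2}, and every smooth function f : [1, 2N] → ℝ satisfying |f^{(j+1)}(x) − t^{1/3}·(d^j/dx^j)(x^{−1/3})| ≤ δ·t^{1/3}·|(d^j/dx^j)(x^{−1/3})| for all x ∈ [1, 2N] and all integers 0 ≤ j ≤ J, one has N^{−2/3}·|∑_{k=1}^{N} exp(i·f(k))| ≤ C·t^{959/22224 + ε}. In particular, since 959/22224 < 1/23, the left-hand side is bounded by a constant times t^{1/23}. -/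

import Mathlib

open Finset

/-- `(p, q)` is an exponent pair: for every `σ > 0` there are `δ > 0`, `J ∈ ℕ`, `C > 0`
such that for all `N ≤ N' ≤ 2N`, `T ≥ N^σ`, and every smooth `f` on `[N, 2N]` whose
derivatives up to order `J+1` are `δ`-close to those of the model phase `T x^{−σ}`,
one has `|∑_{n=N}^{N'} e^{i f(n)}| ≤ C (T N^{−σ})^p N^q`. -/
def IsExponentPair (p q : ℝ) : Prop :=
  ∀ σ : ℝ, 0 < σ →
    ∃ δ : ℝ, 0 < δ ∧ ∃ J : ℕ, ∃ C : ℝ, 0 < C ∧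
      ∀ N N' : ℕ, 1 ≤ N → N ≤ N' → N' ≤ 2 * N →
      ∀ T : ℝ, (N : ℝ) ^ σ ≤ T →
      ∀ f : ℝ → ℝ, ContDiffOn ℝ (⊤ : ℕ∞) f (Set.Icc (N : ℝ) (2 * (N : ℝ))) →
      (∀ x ∈ Set.Icc (N : ℝ) (2 * (N : ℝ)), ∀ j : ℕ, j ≤ J →
        |iteratedDerivWithin (j + 1) f (Set.Icc (N : ℝ) (2 * (N : ℝ))) x
            - T * iteratedDeriv j (fun y : ℝ => y ^ (-σ)) x|
          ≤ δ * T * |iteratedDeriv j (fun y : ℝ => y ^ (-σ)) x|) →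
      ‖∑ n ∈ Finset.Icc N N', Complex.exp (Complex.I * ((f (n : ℝ) : ℝ) : ℂ))‖
        ≤ C * (T / (N : ℝ) ^ σ) ^ p * (N : ℝ) ^ q

lemma iterDW_subset {f : ℝ → ℝ} {s u : Set ℝ} (hsu : s ⊆ u) (hs : UniqueDiffOn ℝ s)
    (hu : UniqueDiffOn ℝ u) (hf : ContDiffOn ℝ (⊤ : ℕ∞) f u) {x : ℝ} (hx : x ∈ s) (n : ℕ) :
    iteratedDerivWithin n f s x = iteratedDerivWithin n f u x := by
  simp only [iteratedDerivWithin_eq_iteratedFDerivWithin]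
  rw [← ((hf.ftaylorSeriesWithin hu).mono hsu).eq_iteratedFDerivWithin_of_uniqueDiffOn
    (by exact_mod_cast le_top) hs hx]
  rfl

lemma dyadic_partition (N : ℕ) (hN : 1 ≤ N) :
    Finset.Icc 1 N =
      (Finset.range (Nat.log 2 N + 1)).biUnion
        (fun i => Finset.Icc (2 ^ i) (min (2 ^ (i + 1) - 1) N)) := by
  ext k
  simp only [Finset.mem_biUnion, Finset.mem_Icc, Finset.mem_range, le_min_iff, Nat.lt_succ_iff]
  constructor
  · rintro ⟨hk1, hkN⟩
    refine ⟨Nat.log 2 k, Nat.log_mono_right hkN, Nat.pow_log_le_self 2 (by omega), ?_, hkN⟩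
    have := Nat.lt_pow_succ_log_self (b := 2) (by norm_num) k
    omega
  · rintro ⟨i, _, h2, _, h4⟩
    have : 1 ≤ 2 ^ i := Nat.one_le_two_pow
    omega

lemma dyadic_disjoint (N : ℕ) :
    Set.PairwiseDisjoint ↑(Finset.range (Nat.log 2 N + 1))
      (fun i => Finset.Icc (2 ^ i) (min (2 ^ (i + 1) - 1) N)) := by
  intro i _ j _ hij
  refine Finset.disjoint_left.2 fun k hk hk' => ?_
  simp only [Finset.mem_Icc, le_min_iff] at hk hk'
  rcases lt_or_gt_of_ne hij with h | h
  · have h1 : 2 ^ (i + 1) ≤ 2 ^ j := Nat.pow_le_pow_right (by norm_num) h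
    have h2 : 1 ≤ 2 ^ (i + 1) := Nat.one_le_two_pow
    omega
  · have h1 : 2 ^ (j + 1) ≤ 2 ^ i := Nat.pow_le_pow_right (by norm_num) h
    have h2 : 1 ≤ 2 ^ (j + 1) := Nat.one_le_two_pow
    omega

lemma dyadic_sum_bound (p q δ' : ℝ) (J' : ℕ) (C' : ℝ) (hC' : 0 < C')
    (H : ∀ M M' : ℕ, 1 ≤ M → M ≤ M' → M' ≤ 2 * M →
      ∀ T : ℝ, (M : ℝ) ^ (1 / 3 : ℝ) ≤ T →
      ∀ f : ℝ → ℝ, ContDiffOn ℝ (⊤ : ℕ∞) f (Set.Icc (M : ℝ) (2 * (M : ℝ))) →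
      (∀ x ∈ Set.Icc (M : ℝ) (2 * (M : ℝ)), ∀ j : ℕ, j ≤ J' →
        |iteratedDerivWithin (j + 1) f (Set.Icc (M : ℝ) (2 * (M : ℝ))) x
            - T * iteratedDeriv j (fun y : ℝ => y ^ (-(1 / 3 : ℝ))) x|
          ≤ δ' * T * |iteratedDeriv j (fun y : ℝ => y ^ (-(1 / 3 : ℝ))) x|) →
      ‖∑ n ∈ Finset.Icc M M', Complex.exp (Complex.I * ((f (n : ℝ) : ℝ) : ℂ))‖
        ≤ C' * (T / (M : ℝ) ^ (1 / 3 : ℝ)) ^ p * (M : ℝ) ^ q)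
    (hq : 0 ≤ q - p / 3)
    (t : ℝ) (ht : 2 ≤ t) (N : ℕ) (hN : 1 ≤ N) (hNt : (N : ℝ) ≤ t ^ ((1 : ℝ) / 2))
    (f : ℝ → ℝ) (hf : ContDiffOn ℝ (⊤ : ℕ∞) f (Set.Icc (1 : ℝ) (2 * (N : ℝ))))
    (hfd : ∀ x ∈ Set.Icc (1 : ℝ) (2 * (N : ℝ)), ∀ j : ℕ, j ≤ J' →
        |iteratedDerivWithin (j + 1) f (Set.Icc (1 : ℝ) (2 * (N : ℝ))) x
            - t ^ ((1 : ℝ) / 3) * iteratedDeriv j (fun y : ℝ => y ^ (-(1 / 3 : ℝ))) x|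
          ≤ δ' * t ^ ((1 : ℝ) / 3) * |iteratedDeriv j (fun y : ℝ => y ^ (-(1 / 3 : ℝ))) x|) :
    ‖∑ k ∈ Finset.Icc 1 N, Complex.exp (Complex.I * ((f (k : ℝ) : ℝ) : ℂ))‖
      ≤ ((Nat.log 2 N : ℝ) + 1) * (C' * t ^ (p / 3) * (N : ℝ) ^ (q - p / 3)) := by
  have ht1 : (1 : ℝ) ≤ t := by linarith
  have ht0 : (0 : ℝ) < t := by linarith
  have hNr : (1 : ℝ) ≤ (N : ℝ) := by exact_mod_cast hN
  have hT0 : (0 : ℝ) ≤ t ^ ((1 : ℝ) / 3) := Real.rpow_nonneg ht0.le _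
  rw [dyadic_partition N hN, Finset.sum_biUnion (dyadic_disjoint N)]
  refine le_trans (norm_sum_le _ _) ?_
  refine le_trans (Finset.sum_le_card_nsmul _ _ (C' * t ^ (p / 3) * (N : ℝ) ^ (q - p / 3)) ?_) ?_
  · intro i hi
    simp only [Finset.mem_range, Nat.lt_succ_iff] at hi
    set M : ℕ := 2 ^ i with hMdef
    have hM1 : 1 ≤ M := Nat.one_le_two_pow
    have hMN : M ≤ N :=
      le_trans (Nat.pow_le_pow_right (by norm_num) hi) (Nat.pow_log_le_self 2 (by omega))
    have hMr : (1 : ℝ) ≤ (M : ℝ) := by exact_mod_cast hM1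
    have hM0 : (0 : ℝ) < (M : ℝ) := by linarith
    have hMNr : (M : ℝ) ≤ (N : ℝ) := by exact_mod_cast hMN
    have hsub : Set.Icc (M : ℝ) (2 * (M : ℝ)) ⊆ Set.Icc (1 : ℝ) (2 * (N : ℝ)) :=
      Set.Icc_subset_Icc hMr (by linarith)
    have hud1 : UniqueDiffOn ℝ (Set.Icc (M : ℝ) (2 * (M : ℝ))) := uniqueDiffOn_Icc (by linarith)
    have hud2 : UniqueDiffOn ℝ (Set.Icc (1 : ℝ) (2 * (N : ℝ))) := uniqueDiffOn_Icc (by linarith)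
    have hMt : (M : ℝ) ≤ t := by
      refine le_trans hMNr (le_trans hNt ?_)
      calc t ^ ((1 : ℝ) / 2) ≤ t ^ (1 : ℝ) := Real.rpow_le_rpow_of_exponent_le ht1 (by norm_num)
      _ = t := Real.rpow_one t
    have hTM : (M : ℝ) ^ (1 / 3 : ℝ) ≤ t ^ ((1 : ℝ) / 3) :=
      Real.rpow_le_rpow hM0.le hMt (by norm_num)
    have h21 : 2 ^ (i + 1) = 2 * M := by rw [hMdef]; ring
    have key := H M (min (2 ^ (i + 1) - 1) N) hM1
      (le_min (by omega) hMN) (by omega)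
      (t ^ ((1 : ℝ) / 3)) hTM f (hf.mono hsub) ?_
    · refine le_trans key ?_
      have e1 : C' * (t ^ ((1 : ℝ) / 3) / (M : ℝ) ^ (1 / 3 : ℝ)) ^ p * (M : ℝ) ^ q
          = C' * t ^ (p / 3) * (M : ℝ) ^ (q - p / 3) := by
        rw [Real.div_rpow hT0 (Real.rpow_nonneg hM0.le _),
            ← Real.rpow_mul ht0.le, ← Real.rpow_mul hM0.le, Real.rpow_sub hM0,
            show (1 : ℝ) / 3 * p = p / 3 by ring]
        ring
      rw [e1]
      have := Real.rpow_le_rpow hM0.le hMNr hq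
      have hpos : (0 : ℝ) ≤ C' * t ^ (p / 3) := by positivity
      nlinarith [Real.rpow_nonneg hM0.le (q - p / 3)]
    · intro x hx j hj
      rw [iterDW_subset hsub hud1 hud2 hf hx]
      exact hfd x (hsub hx) j hj
  · rw [Finset.card_range, nsmul_eq_mul]
    push_cast
    exact le_rfl

lemma case_combine (t Nr S L1 K C' a b c E : ℝ)
    (ht1 : 1 ≤ t) (hNr : 0 < Nr) (hL1 : 0 ≤ L1) (hC' : 0 ≤ C') (hK : 0 ≤ K)
    (hkey : S ≤ L1 * (C' * t ^ a * Nr ^ b))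
    (hlog : L1 ≤ K * t ^ c)
    (hpow : Nr ^ (b - 2 / 3) ≤ t ^ (E - a - c)) :
    Nr ^ (-(2 / 3 : ℝ)) * S ≤ K * C' * t ^ E := by
  have ht0 : (0 : ℝ) < t := lt_of_lt_of_le one_pos ht1
  have h1 : Nr ^ (-(2 / 3 : ℝ)) * S ≤ Nr ^ (-(2 / 3 : ℝ)) * (L1 * (C' * t ^ a * Nr ^ b)) :=
    mul_le_mul_of_nonneg_left hkey (Real.rpow_nonneg hNr.le _)
  have h2 : Nr ^ (-(2 / 3 : ℝ)) * (L1 * (C' * t ^ a * Nr ^ b))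
      = L1 * C' * t ^ a * Nr ^ (b - 2 / 3) := by
    rw [show b - 2 / 3 = b + -(2 / 3) by ring, Real.rpow_add hNr]; ring
  have h3 : L1 * C' * t ^ a * Nr ^ (b - 2 / 3) ≤ K * t ^ c * C' * t ^ a * t ^ (E - a - c) := by
    refine mul_le_mul (mul_le_mul (mul_le_mul_of_nonneg_right hlog hC') le_rfl
      (Real.rpow_nonneg ht0.le a) ?_) hpow (Real.rpow_nonneg hNr.le _) ?_
    · exact mul_nonneg (mul_nonneg hK (Real.rpow_nonneg ht0.le _)) hC'
    · exact mul_nonneg (mul_nonneg (mul_nonneg hK (Real.rpow_nonneg ht0.le _)) hC')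
        (Real.rpow_nonneg ht0.le _)
  have h4 : K * t ^ c * C' * t ^ a * t ^ (E - a - c) = K * C' * t ^ E := by
    calc K * t ^ c * C' * t ^ a * t ^ (E - a - c)
        = K * C' * (t ^ c * (t ^ a * t ^ (E - a - c))) := by ring
      _ = K * C' * t ^ E := by
          rw [← Real.rpow_add ht0, ← Real.rpow_add ht0,
            show a + (E - a - c) = E - c by ring, show c + (E - c) = E by ring]
  linarith

/-- Unconditional exponential-sum bound using the known exponent pairs
`(1/915 + ε₀, 1 − 10/915 + ε₀)` and `(13/84 + ε₀, 13/84 + 1/2 + ε₀)`: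
`N^{−2/3} |∑_{k=1}^N e^{i f(k)}| ≲ t^{959/22224 + ε}` for phases modelled on
`t^{1/3} x^{−1/3}` and `N ≤ t^{1/2}`. -/
theorem statement19
    (hp1 : ∀ ε₀ : ℝ, 0 < ε₀ → IsExponentPair (1 / 915 + ε₀) (1 - 10 / 915 + ε₀))
    (hp2 : ∀ ε₀ : ℝ, 0 < ε₀ → IsExponentPair (13 / 84 + ε₀) (13 / 84 + 1 / 2 + ε₀)) :
    ∀ ε : ℝ, 0 < ε →
    ∃ δ : ℝ, 0 < δ ∧ ∃ J : ℕ, ∃ C : ℝ, 0 < C ∧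
    ∀ t : ℝ, 2 ≤ t → ∀ N : ℕ, 1 ≤ N → (N : ℝ) ≤ t ^ ((1 : ℝ) / 2) →
    ∀ f : ℝ → ℝ, ContDiffOn ℝ (⊤ : ℕ∞) f (Set.Icc (1 : ℝ) (2 * (N : ℝ))) →
    (∀ x ∈ Set.Icc (1 : ℝ) (2 * (N : ℝ)), ∀ j : ℕ, j ≤ J →
      |iteratedDerivWithin (j + 1) f (Set.Icc (1 : ℝ) (2 * (N : ℝ))) x
          - t ^ ((1 : ℝ) / 3) * iteratedDeriv j (fun y : ℝ => y ^ (-(1 / 3 : ℝ))) x|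
        ≤ δ * t ^ ((1 : ℝ) / 3) * |iteratedDeriv j (fun y : ℝ => y ^ (-(1 / 3 : ℝ))) x|) →
    (N : ℝ) ^ (-(2 / 3 : ℝ)) *
        ‖∑ k ∈ Finset.Icc 1 N, Complex.exp (Complex.I * ((f (k : ℝ) : ℝ) : ℂ))‖
      ≤ C * t ^ (959 / 22224 + ε) := by
  intro ε hε
  set ε₀ : ℝ := min (ε / 3) (1 / 100) with hε₀def
  have hε₀pos : 0 < ε₀ := lt_min (by linarith) (by norm_num)
  have hε₀ε : ε₀ ≤ ε / 3 := min_le_left _ _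
  have hε₀small : ε₀ ≤ 1 / 100 := min_le_right _ _
  obtain ⟨δ₁, hδ₁, J₁, C₁, hC₁, H₁⟩ := hp1 ε₀ hε₀pos (1 / 3) (by norm_num)
  obtain ⟨δ₂, hδ₂, J₂, C₂, hC₂, H₂⟩ := hp2 ε₀ hε₀pos (1 / 3) (by norm_num)
  refine ⟨min δ₁ δ₂, lt_min hδ₁ hδ₂, max J₁ J₂, (3 / ε + 1) * (C₁ + C₂), by positivity, ?_⟩
  intro t ht N hN hNt f hf hfd
  have ht0 : (0 : ℝ) < t := by linarith
  have ht1 : (1 : ℝ) ≤ t := by linarith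
  have hNr : (1 : ℝ) ≤ (N : ℝ) := by exact_mod_cast hN
  have hN0 : (0 : ℝ) < (N : ℝ) := by linarith
  have hT0 : (0 : ℝ) ≤ t ^ ((1 : ℝ) / 3) := Real.rpow_nonneg ht0.le _
  have hK0 : (0 : ℝ) ≤ 3 / ε + 1 := by positivity
  -- weakened derivative hypotheses
  have hfd1 : ∀ x ∈ Set.Icc (1 : ℝ) (2 * (N : ℝ)), ∀ j : ℕ, j ≤ J₁ →
      |iteratedDerivWithin (j + 1) f (Set.Icc (1 : ℝ) (2 * (N : ℝ))) x
          - t ^ ((1 : ℝ) / 3) * iteratedDeriv j (fun y : ℝ => y ^ (-(1 / 3 : ℝ))) x|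
        ≤ δ₁ * t ^ ((1 : ℝ) / 3) * |iteratedDeriv j (fun y : ℝ => y ^ (-(1 / 3 : ℝ))) x| := by
    intro x hx j hj
    refine le_trans (hfd x hx j (hj.trans (le_max_left _ _))) ?_
    exact mul_le_mul_of_nonneg_right
      (mul_le_mul_of_nonneg_right (min_le_left _ _) hT0) (abs_nonneg _)
  have hfd2 : ∀ x ∈ Set.Icc (1 : ℝ) (2 * (N : ℝ)), ∀ j : ℕ, j ≤ J₂ →
      |iteratedDerivWithin (j + 1) f (Set.Icc (1 : ℝ) (2 * (N : ℝ))) x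
          - t ^ ((1 : ℝ) / 3) * iteratedDeriv j (fun y : ℝ => y ^ (-(1 / 3 : ℝ))) x|
        ≤ δ₂ * t ^ ((1 : ℝ) / 3) * |iteratedDeriv j (fun y : ℝ => y ^ (-(1 / 3 : ℝ))) x| := by
    intro x hx j hj
    refine le_trans (hfd x hx j (hj.trans (le_max_right _ _))) ?_
    exact mul_le_mul_of_nonneg_right
      (mul_le_mul_of_nonneg_right (min_le_right _ _) hT0) (abs_nonneg _)
  have key1 := dyadic_sum_bound (1 / 915 + ε₀) (1 - 10 / 915 + ε₀) δ₁ J₁ C₁ hC₁ H₁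
    (by linarith) t ht N hN hNt f hf hfd1
  have key2 := dyadic_sum_bound (13 / 84 + ε₀) (13 / 84 + 1 / 2 + ε₀) δ₂ J₂ C₂ hC₂ H₂
    (by linarith) t ht N hN hNt f hf hfd2
  have hL1 : (0 : ℝ) ≤ (Nat.log 2 N : ℝ) + 1 := by positivity
  -- log bound
  have hlog : (Nat.log 2 N : ℝ) + 1 ≤ (3 / ε + 1) * t ^ (ε / 3) := by
    have h2L : ((2 : ℝ)) ^ (Nat.log 2 N) ≤ (N : ℝ) := by
      exact_mod_cast Nat.pow_log_le_self 2 (by omega)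
    have hlogN : (Nat.log 2 N : ℝ) * Real.log 2 ≤ Real.log N := by
      have := Real.log_le_log (by positivity) h2L
      rwa [Real.log_pow] at this
    have hlogNt : Real.log N ≤ 1 / 2 * Real.log t := by
      have := Real.log_le_log hN0 hNt
      rwa [Real.log_rpow ht0] at this
    have hlog2 : (1 / 2 : ℝ) ≤ Real.log 2 := by
      linarith [Real.log_two_gt_d9]
    have hLc0 : (0 : ℝ) ≤ (Nat.log 2 N : ℝ) := Nat.cast_nonneg _
    have hLt : (Nat.log 2 N : ℝ) ≤ Real.log t := by nlinarith
    have hlt : Real.log t ≤ t ^ (ε / 3) / (ε / 3) :=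
      Real.log_le_rpow_div ht0.le (by positivity)
    have h1t : (1 : ℝ) ≤ t ^ (ε / 3) := Real.one_le_rpow ht1 (by positivity)
    have hdiv : t ^ (ε / 3) / (ε / 3) = 3 / ε * t ^ (ε / 3) := by
      field_simp
    have hexp : (3 / ε + 1) * t ^ (ε / 3) = 3 / ε * t ^ (ε / 3) + t ^ (ε / 3) := by ring
    linarith
  rcases le_or_gt (N : ℝ) (t ^ ((3937 : ℝ) / 29632)) with hcase | hcase
  · -- use pair 1
    refine le_trans (case_combine t (N : ℝ) _ _ ((3 : ℝ) / ε + 1) C₁ _ _ (ε / 3)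
      (959 / 22224 + ε) ht1 hN0 hL1 hC₁.le hK0 key1 hlog ?_) ?_
    · have hb : (0 : ℝ) ≤ (1 - 10 / 915 + ε₀) - (1 / 915 + ε₀) / 3 - 2 / 3 := by linarith
      have h := Real.rpow_le_rpow hN0.le hcase hb
      rw [← Real.rpow_mul ht0.le] at h
      refine le_trans h (Real.rpow_le_rpow_of_exponent_le ht1 (by linarith))
    · refine mul_le_mul_of_nonneg_right
        (mul_le_mul_of_nonneg_left (by linarith) hK0) (Real.rpow_nonneg ht0.le _)
  · -- use pair 2
    refine le_trans (case_combine t (N : ℝ) _ _ ((3 : ℝ) / ε + 1) C₂ _ _ (ε / 3)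
      (959 / 22224 + ε) ht1 hN0 hL1 hC₂.le hK0 key2 hlog ?_) ?_
    · have hb : (13 / 84 + 1 / 2 + ε₀) - (13 / 84 + ε₀) / 3 - 2 / 3 ≤ 0 := by linarith
      have h := Real.rpow_le_rpow_of_nonpos (Real.rpow_pos_of_pos ht0 _) hcase.le hb
      rw [← Real.rpow_mul ht0.le] at h
      refine le_trans h (Real.rpow_le_rpow_of_exponent_le ht1 (by linarith))
    · refine mul_le_mul_of_nonneg_right
        (mul_le_mul_of_nonneg_left (by linarith) hK0) (Real.rpow_nonneg ht0.le _)
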